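/- Let G be an r-SPTG in which every non-final location is urgent. For every location ℓ and every ν ∈ [0,r], if Val_G(ℓ,ν) is finite then there exists f ∈ F_G such that Val_G(ℓ,ν) = f(ν). -/

import Mathlib

/-!
Common formalization of one-clock priced timed games (PTGs), following
"Simple Priced Timed Games are not That Simple".
-/

namespace PTGPaper

/-- The three kinds of locations: locations of player Min, of player Max, and final locations. -/
inductive Owner : Type
  | min : Owner
  | max : Owner
  | final : Owner
deriving DecidableEq

/-- A transition of a one-clock priced timed game: a source location, a guard
(an interval with endpoints `lo`, `hi`, with openness flags `loOpen`, `hiOpen`),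
a reset flag, a discrete price, and a target location. -/
structure PTrans (L : Type) where
  src : L
  lo : ℝ
  hi : ℝ
  loOpen : Bool
  hiOpen : Bool
  reset : Bool
  price : ℤ
  tgt : L

noncomputable instance {L : Type} : DecidableEq (PTrans L) := Classical.decEq _

/-- Membership of a clock value in the guard of a transition. -/
def PTrans.memGuard {L : Type} (δ : PTrans L) (ν : ℝ) : Prop :=
  (if δ.loOpen then δ.lo < ν else δ.lo ≤ ν) ∧
  (if δ.hiOpen then ν < δ.hi else ν ≤ δ.hi)

/-- A one-clock priced timed game. -/
structure PTG where
  Loc : Type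
  locFin : Fintype Loc
  locDec : DecidableEq Loc
  owner : Loc → Owner
  urgent : Loc → Bool
  M : ℕ
  trans : Finset (PTrans Loc)
  price : Loc → ℤ
  fcost : Loc → ℝ → ℝ

attribute [instance] PTG.locFin PTG.locDec

/-- A configuration: a location together with a clock valuation. -/
abbrev PTG.Config (G : PTG) := G.Loc × ℝ

/-- `G.Move s s' t δ c` holds if from configuration `s`, waiting `t` time units and then
taking transition `δ` is legal, leads to configuration `s'` and costs `c`. -/
def PTG.Move (G : PTG) (s s' : G.Config) (t : ℝ) (δ : PTrans G.Loc) (c : ℝ) : Prop :=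
  δ ∈ G.trans ∧ δ.src = s.1 ∧ 0 ≤ t ∧ (G.urgent s.1 = true → t = 0) ∧
  δ.memGuard (s.2 + t) ∧ s'.1 = δ.tgt ∧
  s'.2 = (if δ.reset then 0 else s.2 + t) ∧
  c = (δ.price : ℝ) + t * (G.price s.1 : ℝ)

/-- A finite play (history): an initial configuration followed by a list of steps,
each step consisting of a delay, the transition taken, and the configuration reached. -/
structure Hist (L : Type) where
  start : L × ℝ
  steps : List (ℝ × PTrans L × (L × ℝ))

namespace Hist

variable {L : Type}

def lastFrom (s : L × ℝ) : List (ℝ × PTrans L × (L × ℝ)) → L × ℝ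
  | [] => s
  | (_, _, s') :: rest => lastFrom s' rest

/-- The last configuration of a finite play. -/
def last (h : Hist L) : L × ℝ := lastFrom h.start h.steps

def costFrom (π : L → ℤ) (s : L × ℝ) : List (ℝ × PTrans L × (L × ℝ)) → ℝ
  | [] => 0
  | (t, δ, s') :: rest => ((δ.price : ℝ) + t * (π s.1 : ℝ)) + costFrom π s' rest

/-- The sum of the prices of the discrete transitions along a finite play. -/
def discSum (h : Hist L) : ℤ := (h.steps.map (fun st => st.2.1.price)).sum

/-- The prefix of a finite play consisting of its first `i` steps. -/
def take (h : Hist L) (i : ℕ) : Hist L := ⟨h.start, h.steps.take i⟩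

end Hist

/-- Validity of a sequence of steps, starting from a given configuration. -/
def PTG.ValidFrom (G : PTG) : G.Config → List (ℝ × PTrans G.Loc × G.Config) → Prop
  | _, [] => True
  | s, (t, δ, s') :: rest => (∃ c, G.Move s s' t δ c) ∧ G.ValidFrom s' rest

/-- A valid finite play of `G`. -/
def PTG.HistValid (G : PTG) (h : Hist G.Loc) : Prop :=
  0 ≤ h.start.2 ∧ h.start.2 ≤ (G.M : ℝ) ∧ G.ValidFrom h.start h.steps

/-- Accumulated cost of the moves of a finite play (without any final cost). -/
def PTG.accCost (G : PTG) (h : Hist G.Loc) : ℝ := Hist.costFrom G.price h.start h.steps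

/-- A (deterministic) strategy, given as a function from finite plays to
a pair (delay, transition). -/
abbrev StratFun (L : Type) := Hist L → ℝ × PTrans L

/-- A finite play is consistent with strategy `σ` of the player owning locations of kind `P`
if at every step taken from a location of that player, the move is the one prescribed
by `σ` on the corresponding prefix. -/
def PTG.Consistent (G : PTG) (P : Owner) (σ : StratFun G.Loc) (h : Hist G.Loc) : Prop :=
  ∀ (i : ℕ) (hi : i < h.steps.length),
    G.owner (h.take i).last.1 = P →
    ((h.steps.get ⟨i, hi⟩).1, (h.steps.get ⟨i, hi⟩).2.1) = σ (h.take i)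

/-- A strategy of the player owning the locations of kind `P` is valid if it proposes
a legal move after every valid finite play ending in a location of that player. -/
def PTG.StratValid (G : PTG) (P : Owner) (σ : StratFun G.Loc) : Prop :=
  ∀ h : Hist G.Loc, G.HistValid h → G.owner h.last.1 = P →
    ∃ s' c, G.Move h.last s' (σ h).1 (σ h).2 c

def PTG.MinValid (G : PTG) (σ : StratFun G.Loc) : Prop := G.StratValid Owner.min σ

def PTG.MaxValid (G : PTG) (τ : StratFun G.Loc) : Prop := G.StratValid Owner.max τ

/-- The configuration reached from `s` by the move `td = (delay, transition)`. -/
def PTG.nextCfg (G : PTG) (s : G.Config) (td : ℝ × PTrans G.Loc) : G.Config :=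
  (td.2.tgt, if td.2.reset then 0 else s.2 + td.1)

/-- The finite play of length (at most) `n` obtained from initial configuration `s₀` when
Min plays `σ` and Max plays `τ` (the play stops growing when a final location is reached). -/
def PTG.histOf (G : PTG) (σ τ : StratFun G.Loc) (s₀ : G.Config) : ℕ → Hist G.Loc
  | 0 => ⟨s₀, []⟩
  | n + 1 =>
    let h := G.histOf σ τ s₀ n
    if G.owner h.last.1 = Owner.final then h
    else
      let td := if G.owner h.last.1 = Owner.min then σ h else τ h
      ⟨h.start, h.steps ++ [(td.1, td.2, G.nextCfg h.last td)]⟩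

open Classical in
/-- The cost of the play from `s₀` determined by the profile `(σ, τ)`: `+∞` if no final
location is ever reached, and otherwise the accumulated cost up to the first visit of a
final location, plus the final cost function of that location evaluated at the current
clock value. -/
noncomputable def PTG.playCost (G : PTG) (σ τ : StratFun G.Loc) (s₀ : G.Config) : EReal :=
  if hx : ∃ n, G.owner ((G.histOf σ τ s₀ n).last.1) = Owner.final then
    (((G.accCost (G.histOf σ τ s₀ (Nat.find hx)) +
        G.fcost ((G.histOf σ τ s₀ (Nat.find hx)).last.1)
          ((G.histOf σ τ s₀ (Nat.find hx)).last.2)) : ℝ) : EReal)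
  else ⊤

/-- `Val^σ(s)`, the value of a Min strategy `σ`. -/
noncomputable def PTG.minValue (G : PTG) (σ : StratFun G.Loc) (s : G.Config) : EReal :=
  ⨆ τ : {τ : StratFun G.Loc // G.MaxValid τ}, G.playCost σ τ.1 s

/-- `Val^τ(s)`, the value of a Max strategy `τ`. -/
noncomputable def PTG.maxValue (G : PTG) (τ : StratFun G.Loc) (s : G.Config) : EReal :=
  ⨅ σ : {σ : StratFun G.Loc // G.MinValid σ}, G.playCost σ.1 τ s

/-- The upper value of the game. -/
noncomputable def PTG.uval (G : PTG) (s : G.Config) : EReal :=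
  ⨅ σ : {σ : StratFun G.Loc // G.MinValid σ}, G.minValue σ.1 s

/-- The lower value of the game. -/
noncomputable def PTG.lval (G : PTG) (s : G.Config) : EReal :=
  ⨆ τ : {τ : StratFun G.Loc // G.MaxValid τ}, G.maxValue τ.1 s

/-- The value of the game (games are determined, so this coincides with the upper value). -/
noncomputable def PTG.val (G : PTG) (s : G.Config) : EReal := G.lval s

/-- The fake value of a Min strategy `σ` at configuration `s`: the supremum of the costs of
the plays consistent with `σ` from `s` that do reach a final location. -/
noncomputable def PTG.fakeVal (G : PTG) (σ : StratFun G.Loc) (s : G.Config) : EReal :=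
  sSup {x : EReal | ∃ h : Hist G.Loc, h.start = s ∧ G.HistValid h ∧
    G.Consistent Owner.min σ h ∧ G.owner h.last.1 = Owner.final ∧
    x = (((G.accCost h + G.fcost h.last.1 h.last.2) : ℝ) : EReal)}

/-- Well-formedness of a PTG: transitions leave non-final locations only, guards are
contained in `[0, M]`, urgent locations are non-final, final cost functions are affine with
rational coefficients, and the game is deadlock-free. -/
def PTG.WF (G : PTG) : Prop :=
  (∀ δ ∈ G.trans, G.owner δ.src ≠ Owner.final) ∧
  (∀ δ ∈ G.trans, 0 ≤ δ.lo ∧ δ.hi ≤ (G.M : ℝ)) ∧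
  (∀ ℓ, G.urgent ℓ = true → G.owner ℓ ≠ Owner.final) ∧
  (∀ ℓ, G.owner ℓ = Owner.final → ∃ a b : ℚ, ∀ ν : ℝ, G.fcost ℓ ν = (a : ℝ) * ν + (b : ℝ)) ∧
  (∀ (ℓ : G.Loc) (ν : ℝ), G.owner ℓ ≠ Owner.final → 0 ≤ ν → ν ≤ (G.M : ℝ) →
    ∃ s' t δ c, G.Move (ℓ, ν) s' t δ c)

/-- All guards have natural-number endpoints. -/
def PTG.NatEndpoints (G : PTG) : Prop :=
  ∀ δ ∈ G.trans, (∃ n : ℕ, δ.lo = (n : ℝ)) ∧ ∃ n : ℕ, δ.hi = (n : ℝ)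

/-- `P_T`: the largest absolute value of a transition price. -/
def PTG.PT (G : PTG) : ℕ := G.trans.sup fun δ => δ.price.natAbs

/-- `P_L`: the largest absolute value of a location price-rate. -/
def PTG.PL (G : PTG) : ℕ := Finset.univ.sup fun ℓ : G.Loc => (G.price ℓ).natAbs

/-- `P_f`: the largest absolute value taken by a final cost function on `[0, r]`. -/
noncomputable def PTG.Pf (G : PTG) (r : ℝ) : ℝ :=
  sSup {x : ℝ | ∃ (ℓ : G.Loc) (ν : ℝ), G.owner ℓ = Owner.final ∧ 0 ≤ ν ∧ ν ≤ r ∧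
    x = |G.fcost ℓ ν|}

/-- The number of locations `|L|`. -/
def PTG.nLoc (G : PTG) : ℕ := Fintype.card G.Loc

/-- The number of final locations `|L_f|`. -/
def PTG.nFin (G : PTG) : ℕ :=
  (Finset.univ.filter fun ℓ : G.Loc => G.owner ℓ = Owner.final).card

/-- A measure of the size of `G` (locations, transitions, and binary encodings of
the numerical constants). -/
def PTG.size (G : PTG) : ℕ :=
  G.nLoc + G.trans.card + Nat.log2 (G.M + 2) + Nat.log2 (G.PT + 2) + Nat.log2 (G.PL + 2) + 2

/-- `G` is an `r`-SPTG: every transition has guard `[0, r]` and performs no reset. -/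
def PTG.IsSPTG (G : PTG) (r : ℝ) : Prop :=
  0 ≤ r ∧ r ≤ 1 ∧ ∀ δ ∈ G.trans,
    δ.lo = 0 ∧ δ.hi = r ∧ δ.loOpen = false ∧ δ.hiOpen = false ∧ δ.reset = false

/-- The left end of the `i`-th interval determined by the points `pt` (with the convention
`ν₀ = min 0 (pt 0)`). -/
def prevPt {k : ℕ} (pt : Fin (k + 1) → ℝ) (i : Fin (k + 1)) : ℝ :=
  if (i : ℕ) = 0 then min 0 (pt 0) else
    pt ⟨(i : ℕ) - 1, lt_of_le_of_lt (Nat.sub_le _ _) i.isLt⟩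

/-- A finite positional (FP) strategy of the player owning locations of kind `P` in an
`r`-SPTG: a memoryless strategy which, on each location of that player, is described by
finitely many rational threshold points `0 ≤ ν₁ < ⋯ < ν_k = r` and transitions
`δ₁, …, δ_k`, and on each induced interval either always plays immediately
or always waits until the right endpoint of the interval. -/
structure FPStrat (G : PTG) (r : ℝ) (P : Owner) where
  strat : StratFun G.Loc
  valid : G.StratValid P strat
  memoryless : ∀ h h' : Hist G.Loc, G.HistValid h → G.HistValid h' →
    h.last = h'.last → strat h = strat h'
  points : Finset ℝ
  points_rat : ∀ p ∈ points, ∃ q : ℚ, p = (q : ℝ)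
  points_mem : ∀ p ∈ points, 0 ≤ p ∧ p ≤ r
  r_mem : r ∈ points
  piecewise : ∀ ℓ : G.Loc, G.owner ℓ = P →
    ∃ (k : ℕ) (pt : Fin (k + 1) → ℝ) (δ : Fin (k + 1) → PTrans G.Loc),
      StrictMono pt ∧ 0 ≤ pt 0 ∧ pt (Fin.last k) = r ∧ (∀ i, pt i ∈ points) ∧
      (∀ i : Fin (k + 1),
        (∀ ν : ℝ, prevPt pt i < ν → ν ≤ pt i → strat ⟨(ℓ, ν), []⟩ = (0, δ i)) ∨
        (∀ ν : ℝ, prevPt pt i < ν → ν ≤ pt i → strat ⟨(ℓ, ν), []⟩ = (pt i - ν, δ i))) ∧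
      (0 < pt 0 → strat ⟨(ℓ, 0), []⟩ = (pt 0, δ 0))

/-- The size `|σ|` of an FP strategy: the number of intervals generated by its points. -/
def FPStrat.size {G : PTG} {r : ℝ} {P : Owner} (σ : FPStrat G r P) : ℕ := σ.points.card

/-- Two clock values lie in the same interval of the partition induced by `pts`
(intervals being half-open to the left). -/
def SameInterval (pts : Finset ℝ) (ν ν' : ℝ) : Prop := ∀ p ∈ pts, (ν ≤ p ↔ ν' ≤ p)

/-- A negative cycle (NC) strategy of Min: an FP strategy such that along every consistent
finite play which starts and ends in the same location, with both clock values in the same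
interval of the strategy, the sum of the prices of the discrete transitions is at most −1. -/
def FPStrat.IsNC {G : PTG} {r : ℝ} (σ : FPStrat G r Owner.min) : Prop :=
  ∀ h : Hist G.Loc, G.HistValid h → G.Consistent Owner.min σ.strat h →
    h.steps ≠ [] → h.last.1 = h.start.1 → SameInterval σ.points h.start.2 h.last.2 →
    h.discSum ≤ -1

/-- A fake-optimal Min strategy: its fake value equals the value of the game everywhere. -/
def FPStrat.FakeOpt {G : PTG} {r : ℝ} (σ : FPStrat G r Owner.min) : Prop :=
  ∀ (ℓ : G.Loc) (ν : ℝ), 0 ≤ ν → ν ≤ r → G.fakeVal σ.strat (ℓ, ν) = G.val (ℓ, ν)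

/-- An optimal Max FP strategy: its value equals the value of the game everywhere. -/
def FPStrat.Opt {G : PTG} {r : ℝ} (τ : FPStrat G r Owner.max) : Prop :=
  ∀ (ℓ : G.Loc) (ν : ℝ), 0 ≤ ν → ν ≤ r → G.maxValue τ.strat (ℓ, ν) = G.val (ℓ, ν)

/-- A cost function on `[0, r]`: either infinite, or continuous piecewise affine with
finitely many cutpoints, all cutpoints and the values at them being rational. -/
def IsCostFunctionOn (r : ℝ) (f : ℝ → EReal) : Prop :=
  (∀ ν : ℝ, 0 ≤ ν → ν ≤ r → f ν = ⊤) ∨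
  (∀ ν : ℝ, 0 ≤ ν → ν ≤ r → f ν = ⊥) ∨
  ∃ (n : ℕ) (a : Fin (n + 1) → ℚ),
    Monotone a ∧ ((a 0 : ℝ) = 0) ∧ ((a (Fin.last n) : ℝ) = r) ∧
    (∀ i, ∃ q : ℚ, f ((a i : ℚ) : ℝ) = ((q : ℝ) : EReal)) ∧
    ∀ i : Fin n, ∃ α β : ℝ, ∀ ν : ℝ, ((a i.castSucc : ℚ) : ℝ) ≤ ν → ν ≤ ((a i.succ : ℚ) : ℝ) →
      f ν = ((α * ν + β : ℝ) : EReal)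

/-- An `r`-SPTG is finitely optimal if Min has a fake-optimal NC strategy, Max has an optimal
FP strategy, and the value function of every location is a cost function. -/
def PTG.FinitelyOptimal (G : PTG) (r : ℝ) : Prop :=
  (∃ σ : FPStrat G r Owner.min, σ.IsNC ∧ σ.FakeOpt) ∧
  (∃ τ : FPStrat G r Owner.max, τ.Opt) ∧
  ∀ ℓ : G.Loc, IsCostFunctionOn r fun ν => G.val (ℓ, ν)

/-- The finite set `F_G` of affine functions `k + φ_ℓ`, for `ℓ` final and
`k ∈ [−(|L|−1)·P_T, |L|·P_T] ∩ ℤ`. -/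
def PTG.FF (G : PTG) : Set (ℝ → ℝ) :=
  {f | ∃ (ℓ : G.Loc) (k : ℤ), G.owner ℓ = Owner.final ∧
    -(((G.nLoc : ℤ) - 1) * (G.PT : ℤ)) ≤ k ∧ k ≤ (G.nLoc : ℤ) * (G.PT : ℤ) ∧
    f = fun ν => (k : ℝ) + G.fcost ℓ ν}

noncomputable def PTG.FFcard (G : PTG) : ℕ := G.FF.ncard

/-- The set of possible cutpoints: intersection points of two distinct functions of `F_G`. -/
def PTG.posscp (G : PTG) (r : ℝ) : Set ℝ :=
  {ν | 0 ≤ ν ∧ ν ≤ r ∧ ∃ f₁ ∈ G.FF, ∃ f₂ ∈ G.FF, f₁ ≠ f₂ ∧ f₁ ν = f₂ ν}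

/-- The construction `Wait(G, r, x)`: all guards are restricted to `[0, r]` and, for every
non-urgent location `ℓ`, a clone final location `ℓ^f` is added, with final cost function
`ν ↦ (r − ν)·π(ℓ) + x_ℓ`, together with a price-0 transition `(ℓ, ℓ^f)`.
(Clone locations are created for all locations; those of urgent or final locations are
unreachable since no transition leads to them.) -/
noncomputable def PTG.wait (G : PTG) (r : ℝ) (x : G.Loc → ℝ) : PTG where
  Loc := G.Loc ⊕ G.Loc
  locFin := inferInstance
  locDec := inferInstance
  owner := Sum.elim G.owner fun _ => Owner.final
  urgent := Sum.elim G.urgent fun _ => false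
  M := G.M
  trans :=
    (G.trans.image fun δ =>
      { src := Sum.inl δ.src, lo := max δ.lo 0, hi := min δ.hi r,
        loOpen := δ.loOpen, hiOpen := δ.hiOpen, reset := δ.reset,
        price := δ.price, tgt := Sum.inl δ.tgt }) ∪
    ((Finset.univ.filter fun ℓ : G.Loc =>
        G.owner ℓ ≠ Owner.final ∧ G.urgent ℓ = false).image
      fun ℓ => { src := Sum.inl ℓ, lo := 0, hi := r, loOpen := false, hiOpen := false,
                 reset := false, price := 0, tgt := Sum.inr ℓ })
  price := Sum.elim G.price fun _ => 0
  fcost := Sum.elim G.fcost fun ℓ ν => (r - ν) * (G.price ℓ : ℝ) + x ℓ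

/-- `G_r = Wait(G, r, (Val_G(ℓ, r))_ℓ)`. -/
noncomputable def PTG.Gr (G : PTG) (r : ℝ) : PTG :=
  G.wait r fun ℓ => (G.val (ℓ, r)).toReal

/-- Making the locations indicated by `S` urgent. -/
def PTG.makeUrgent (G : PTG) (S : G.Loc → Bool) : PTG :=
  { G with urgent := fun ℓ => G.urgent ℓ || S ℓ }

/-- `G_{L', r}`: the game `G_r` in which all locations of `L'` are made urgent. -/
noncomputable def PTG.GLr (G : PTG) (S : G.Loc → Bool) (r : ℝ) : PTG :=
  (G.Gr r).makeUrgent (Sum.elim S fun _ => false)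

/-- The operator `Next_{L'}(r)`: the supremum of the `r' ≤ r` such that the value functions
of `G_{L',r}` and of `G` coincide on `[r', r]`. -/
noncomputable def PTG.Next (G : PTG) (S : G.Loc → Bool) (r : ℝ) : ℝ :=
  sSup {r' : ℝ | 0 ≤ r' ∧ r' ≤ r ∧ ∀ (ℓ : G.Loc) (ν : ℝ), r' ≤ ν → ν ≤ r →
    (G.GLr S r).val (Sum.inl ℓ, ν) = G.val (ℓ, ν)}

/-- Turning additionally location `ℓ` urgent: `L' ∪ {ℓ}` as a Boolean predicate. -/
def addLoc (G : PTG) (S : G.Loc → Bool) (ℓ : G.Loc) : G.Loc → Bool :=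
  fun ℓ' => S ℓ' || decide (ℓ' = ℓ)

/-- The singleton `{ℓ}` as a Boolean predicate. -/
def singLoc (G : PTG) (ℓ : G.Loc) : G.Loc → Bool := fun ℓ' => decide (ℓ' = ℓ)

/-- `f` is, on `[0, r]`, piecewise affine with at most `N` cutpoints. -/
def PWAffineOn (r : ℝ) (f : ℝ → EReal) (N : ℕ) : Prop :=
  ∃ n : ℕ, n ≤ N ∧ ∃ a : Fin (n + 2) → ℝ,
    Monotone a ∧ a 0 = 0 ∧ a (Fin.last (n + 1)) = r ∧
    ∀ i : Fin (n + 1), ∃ α β : ℝ, ∀ ν : ℝ, a i.castSucc ≤ ν → ν ≤ a i.succ →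
      f ν = ((α * ν + β : ℝ) : EReal)

/-- `f` has a cutpoint in `[a, b)`: some point of `[a, b)` has no neighbourhood
(within `[0,1]`) on which `f` is affine. -/
def HasCutpointIn (f : ℝ → EReal) (a b : ℝ) : Prop :=
  ∃ x : ℝ, a ≤ x ∧ x < b ∧ ∀ ε : ℝ, 0 < ε →
    ¬ ∃ α β : ℝ, ∀ ν : ℝ, max 0 (x - ε) ≤ ν → ν ≤ min 1 (x + ε) →
      f ν = ((α * ν + β : ℝ) : EReal)

/-- The endpoints of the guards of `G`, together with `0`. -/
noncomputable def PTG.endpoints (G : PTG) : Finset ℝ :=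
  insert 0 ((G.trans.image PTrans.lo) ∪ (G.trans.image PTrans.hi))

/-- `s` is a region of `G`: a singleton of an endpoint, or an open interval between two
consecutive endpoints. -/
def PTG.IsRegion (G : PTG) (s : Set ℝ) : Prop :=
  (∃ e ∈ G.endpoints, s = {e}) ∨
  ∃ e ∈ G.endpoints, ∃ e' ∈ G.endpoints, e < e' ∧
    (∀ p ∈ G.endpoints, p ≤ e ∨ e' ≤ p) ∧ s = Set.Ioo e e'

/-- No cycle of the configuration graph of `G` traverses a resetting transition. -/
def PTG.ResetAcyclic (G : PTG) : Prop :=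
  ¬ ∃ h : Hist G.Loc, G.HistValid h ∧ h.steps ≠ [] ∧ h.last = h.start ∧
      ∃ st ∈ h.steps, st.2.1.reset = true

/-- An `ε`-optimal strategy of Min. -/
def PTG.MinEpsOpt (G : PTG) (σ : StratFun G.Loc) (ε : ℝ) : Prop :=
  G.MinValid σ ∧ ∀ (ℓ : G.Loc) (ν : ℝ), 0 ≤ ν → ν ≤ (G.M : ℝ) →
    G.minValue σ (ℓ, ν) ≤ G.val (ℓ, ν) + (ε : EReal)

/-- An `ε`-optimal strategy of Max. -/
def PTG.MaxEpsOpt (G : PTG) (τ : StratFun G.Loc) (ε : ℝ) : Prop :=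
  G.MaxValid τ ∧ ∀ (ℓ : G.Loc) (ν : ℝ), 0 ≤ ν → ν ≤ (G.M : ℝ) →
    G.val (ℓ, ν) - (ε : EReal) ≤ G.maxValue τ (ℓ, ν)

end PTGPaper
namespace PTGPaper

section Aux

open Classical

/-- Transitions leaving `ℓ`. -/
def succsF (G : PTG) (ℓ : G.Loc) : Finset (PTrans G.Loc) :=
  G.trans.filter (fun δ => δ.src = ℓ)

lemma mem_succsF {G : PTG} {ℓ : G.Loc} {δ : PTrans G.Loc} :
    δ ∈ succsF G ℓ ↔ δ ∈ G.trans ∧ δ.src = ℓ := by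
  simp [succsF]

lemma succsF_nonempty {G : PTG} (hwf : G.WF) {ℓ : G.Loc}
    (h : G.owner ℓ ≠ Owner.final) : (succsF G ℓ).Nonempty := by
  obtain ⟨s', t, δ, c, hm⟩ := hwf.2.2.2.2 ℓ 0 h le_rfl (by positivity)
  exact ⟨δ, mem_succsF.2 ⟨hm.1, hm.2.1⟩⟩

lemma M_le_r {G : PTG} {r : ℝ} (hwf : G.WF) (hsptg : G.IsSPTG r)
    (hex : ∃ ℓ : G.Loc, G.owner ℓ ≠ Owner.final) : (G.M : ℝ) ≤ r := by
  obtain ⟨ℓ, hℓ⟩ := hex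
  obtain ⟨s', t, δ, c, hm⟩ := hwf.2.2.2.2 ℓ (G.M : ℝ) hℓ (by positivity) le_rfl
  obtain ⟨hmem, _, ht, _, hg, _⟩ := hm
  obtain ⟨_, hhi, _, hhiO, _⟩ := hsptg.2.2 δ hmem
  have := hg.2
  rw [hhiO, hhi] at this
  simp only [Bool.false_eq_true, if_false] at this
  linarith

lemma r_le_M {G : PTG} {r : ℝ} (hwf : G.WF) (hsptg : G.IsSPTG r)
    (hex : ∃ ℓ : G.Loc, G.owner ℓ ≠ Owner.final) : r ≤ (G.M : ℝ) := by
  obtain ⟨ℓ, hℓ⟩ := hex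
  obtain ⟨δ, hδ⟩ := succsF_nonempty hwf hℓ
  have hmem := (mem_succsF.1 hδ).1
  have h1 := (hwf.2.1 δ hmem).2
  have h2 := (hsptg.2.2 δ hmem).2.1
  rw [h2] at h1; exact h1

/-- In an urgent SPTG, a legal move has a very specific form. -/
lemma move_eq {G : PTG} {r : ℝ} (hwf : G.WF) (hsptg : G.IsSPTG r)
    (hurg : ∀ ℓ : G.Loc, G.owner ℓ ≠ Owner.final → G.urgent ℓ = true)
    {s s' : G.Config} {t : ℝ} {δ : PTrans G.Loc} {c : ℝ}
    (hm : G.Move s s' t δ c) :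
    δ ∈ G.trans ∧ δ.src = s.1 ∧ t = 0 ∧ s' = (δ.tgt, s.2) ∧ c = (δ.price : ℝ) := by
  obtain ⟨hmem, hsrc, ht0, hturg, hg, hs1, hs2, hc⟩ := hm
  have hnf : G.owner s.1 ≠ Owner.final := by rw [← hsrc]; exact hwf.1 δ hmem
  have ht : t = 0 := hturg (hurg _ hnf)
  obtain ⟨_, _, _, _, hres⟩ := hsptg.2.2 δ hmem
  refine ⟨hmem, hsrc, ht, ?_, ?_⟩
  · rw [hres] at hs2
    simp only [ht, add_zero, if_false, Bool.false_eq_true] at hs2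
    exact Prod.ext hs1 hs2
  · rw [hc, ht]; ring

lemma move_intro {G : PTG} {r : ℝ} (hsptg : G.IsSPTG r)
    {ℓ : G.Loc} {w : ℝ} {δ : PTrans G.Loc} (hmem : δ ∈ G.trans) (hsrc : δ.src = ℓ)
    (h0 : 0 ≤ w) (hr : w ≤ r) :
    G.Move (ℓ, w) (δ.tgt, w) 0 δ (δ.price : ℝ) := by
  obtain ⟨hlo, hhi, hloO, hhiO, hres⟩ := hsptg.2.2 δ hmem
  refine ⟨hmem, hsrc, le_rfl, fun _ => rfl, ?_, rfl, ?_, by ring⟩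
  · constructor
    · rw [hloO, hlo]; simp [h0]
    · rw [hhiO, hhi]; simpa using hr
  · rw [hres]; simp

lemma lastFrom_append {L : Type} (s : L × ℝ) (l : List (ℝ × PTrans L × (L × ℝ)))
    (e : ℝ × PTrans L × (L × ℝ)) :
    Hist.lastFrom s (l ++ [e]) = e.2.2 := by
  induction l generalizing s with
  | nil => rfl
  | cons a l ih => exact ih a.2.2

lemma costFrom_append {L : Type} (π : L → ℤ) (s : L × ℝ)
    (l : List (ℝ × PTrans L × (L × ℝ))) (e : ℝ × PTrans L × (L × ℝ)) :
    Hist.costFrom π s (l ++ [e]) =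
      Hist.costFrom π s l + ((e.2.1.price : ℝ) + e.1 * (π (Hist.lastFrom s l).1 : ℝ)) := by
  induction l generalizing s with
  | nil => simp [Hist.costFrom, Hist.lastFrom]
  | cons a l ih => simp [Hist.costFrom, Hist.lastFrom, ih a.2.2]; ring

lemma validFrom_append {G : PTG} (s : G.Config) (l : List (ℝ × PTrans G.Loc × G.Config))
    (t : ℝ) (δ : PTrans G.Loc) (s' : G.Config) :
    G.ValidFrom s (l ++ [(t, δ, s')]) ↔
      G.ValidFrom s l ∧ ∃ c, G.Move (Hist.lastFrom s l) s' t δ c := by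
  induction l generalizing s with
  | nil => simp [PTG.ValidFrom, Hist.lastFrom]
  | cons a l ih =>
    obtain ⟨t', δ', s''⟩ := a
    simp [PTG.ValidFrom, ih s'', Hist.lastFrom, and_assoc]

/-- In an urgent reset-free SPTG the clock never changes along a valid play. -/
lemma validFrom_clock {G : PTG} {r : ℝ} (hwf : G.WF) (hsptg : G.IsSPTG r)
    (hurg : ∀ ℓ : G.Loc, G.owner ℓ ≠ Owner.final → G.urgent ℓ = true) :
    ∀ (l : List (ℝ × PTrans G.Loc × G.Config)) (s : G.Config),
      G.ValidFrom s l → (Hist.lastFrom s l).2 = s.2 := by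
  intro l
  induction l with
  | nil => intro s _; rfl
  | cons a l ih =>
    obtain ⟨t, δ, s'⟩ := a
    intro s hv
    obtain ⟨⟨c, hm⟩, hv'⟩ := hv
    have := move_eq hwf hsptg hurg hm
    have hs' : s'.2 = s.2 := by rw [this.2.2.2.1]
    rw [Hist.lastFrom] at *
    rw [ih s' hv', hs']

end Aux

section Aux2

open Classical

/-! ### EReal helper lemmas -/

lemma ereal_add_iInf {ι : Sort*} (c : ℝ) (f : ι → EReal) :
    ((c : EReal) + ⨅ i, f i) = ⨅ i, ((c : EReal) + f i) := by
  apply le_antisymm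
  · exact le_iInf fun i => add_le_add_right (iInf_le f i) _
  · have h3 : (⨅ i, ((c : EReal) + f i)) - (c : EReal) ≤ ⨅ i, f i := by
      refine le_iInf fun i => ?_
      have h2 := iInf_le (fun i => (c : EReal) + f i) i
      calc (⨅ i, ((c : EReal) + f i)) - (c : EReal) ≤ ((c : EReal) + f i) - c :=
            EReal.sub_le_sub h2 le_rfl
        _ = f i := by rw [add_comm]; exact EReal.add_sub_cancel_right
    rw [EReal.sub_le_iff_le_add (Or.inl (EReal.coe_ne_bot c))
      (Or.inl (EReal.coe_ne_top c))] at h3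
    rw [add_comm] at h3
    exact h3

lemma ereal_add_eq_coe {a b : ℝ} {y : EReal} (h : (a : EReal) + y = (b : EReal)) :
    y = ((b - a : ℝ) : EReal) := by
  induction y using EReal.rec with
  | bot => rw [EReal.add_bot] at h; exact absurd h.symm (EReal.coe_ne_bot b)
  | coe c =>
    rw [← EReal.coe_add, EReal.coe_eq_coe_iff] at h
    rw [EReal.coe_eq_coe_iff]; linarith
  | top =>
    rw [EReal.add_top_of_ne_bot (EReal.coe_ne_bot a)] at h
    exact absurd h.symm (EReal.coe_ne_top b)

lemma iInf_succ_eq {f : ℕ → EReal} (hf : ∀ n, f (n + 1) ≤ f n) :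
    ⨅ n, f (n + 1) = ⨅ n, f n :=
  le_antisymm (le_iInf fun n => (iInf_le (fun n => f (n + 1)) n).trans (hf n))
    (le_iInf fun n => iInf_le f (n + 1))

lemma iInf_finsetInf {α : Type*} (s : Finset α) (g : ℕ → α → EReal) :
    ⨅ n, s.inf (g n) = s.inf (fun a => ⨅ n, g n a) := by
  apply le_antisymm
  · exact Finset.le_inf fun a ha => le_iInf fun n => (iInf_le _ n).trans (Finset.inf_le ha)
  · exact le_iInf fun n => Finset.inf_mono_fun fun a _ => iInf_le _ n

lemma iInf_finsetSup {α : Type*} (s : Finset α) (hs : s.Nonempty) (g : ℕ → α → EReal)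
    (hg : ∀ a, ∀ m n, m ≤ n → g n a ≤ g m a) :
    ⨅ n, s.sup (g n) = s.sup (fun a => ⨅ n, g n a) := by
  apply le_antisymm
  · have hch : ∀ n, ∃ a ∈ s, s.sup (g n) = g n a := fun n =>
      Finset.exists_mem_eq_sup s hs (g n)
    choose d hd hval using hch
    obtain ⟨⟨a, ha⟩, hfib⟩ :=
      Finite.exists_infinite_fiber (fun n => (⟨d n, hd n⟩ : {x // x ∈ s}))
    have hinf : {n : ℕ | (⟨d n, hd n⟩ : {x // x ∈ s}) = ⟨a, ha⟩}.Infinite := by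
      rw [← Set.infinite_coe_iff]; exact hfib
    refine le_trans ?_ (Finset.le_sup ha)
    refine le_iInf fun m => ?_
    obtain ⟨n, hn, hmn⟩ := hinf.exists_gt m
    have hda : d n = a := congrArg Subtype.val hn
    calc ⨅ k, s.sup (g k) ≤ s.sup (g n) := iInf_le _ n
      _ = g n (d n) := hval n
      _ = g n a := by rw [hda]
      _ ≤ g m a := hg a m n hmn.le
  · exact le_iInf fun n => Finset.sup_mono_fun fun a _ => iInf_le _ n

/-! ### Value iteration -/

noncomputable def Viter (G : PTG) (ν : ℝ) : ℕ → G.Loc → EReal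
  | 0 => fun ℓ => if G.owner ℓ = Owner.final then ((G.fcost ℓ ν : ℝ) : EReal) else ⊤
  | n + 1 => fun ℓ =>
      if G.owner ℓ = Owner.final then ((G.fcost ℓ ν : ℝ) : EReal)
      else if G.owner ℓ = Owner.min then
        (succsF G ℓ).inf fun δ => ((δ.price : ℝ) : EReal) + Viter G ν n δ.tgt
      else (succsF G ℓ).sup fun δ => ((δ.price : ℝ) : EReal) + Viter G ν n δ.tgt

lemma Viter_final {G : PTG} {ν : ℝ} {ℓ : G.Loc} (hf : G.owner ℓ = Owner.final) (n : ℕ) :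
    Viter G ν n ℓ = ((G.fcost ℓ ν : ℝ) : EReal) := by
  cases n <;> simp [Viter, hf]

lemma Viter_min {G : PTG} {ν : ℝ} {ℓ : G.Loc} (hm : G.owner ℓ = Owner.min) (n : ℕ) :
    Viter G ν (n + 1) ℓ =
      (succsF G ℓ).inf fun δ => ((δ.price : ℝ) : EReal) + Viter G ν n δ.tgt := by
  simp [Viter, hm]

lemma Viter_max {G : PTG} {ν : ℝ} {ℓ : G.Loc} (hm : G.owner ℓ = Owner.max) (n : ℕ) :
    Viter G ν (n + 1) ℓ =
      (succsF G ℓ).sup fun δ => ((δ.price : ℝ) : EReal) + Viter G ν n δ.tgt := by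
  simp [Viter, hm]

lemma Viter_succ_le {G : PTG} {ν : ℝ} : ∀ (n : ℕ) (ℓ : G.Loc),
    Viter G ν (n + 1) ℓ ≤ Viter G ν n ℓ := by
  intro n
  induction n with
  | zero =>
    intro ℓ
    by_cases hf : G.owner ℓ = Owner.final
    · rw [Viter_final hf, Viter_final hf]
    · simp [Viter, hf]
  | succ n ih =>
    intro ℓ
    cases hο : G.owner ℓ with
    | final => rw [Viter_final hο, Viter_final hο]
    | min =>
      rw [Viter_min hο, Viter_min hο]
      exact Finset.inf_mono_fun fun δ _ => add_le_add_right (ih δ.tgt) _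
    | max =>
      rw [Viter_max hο, Viter_max hο]
      exact Finset.sup_mono_fun fun δ _ => add_le_add_right (ih δ.tgt) _

lemma Viter_le_of_le {G : PTG} {ν : ℝ} (ℓ : G.Loc) {m n : ℕ} (h : m ≤ n) :
    Viter G ν n ℓ ≤ Viter G ν m ℓ := by
  have ha : Antitone (fun n => Viter G ν n ℓ) :=
    antitone_nat_of_succ_le (fun k => Viter_succ_le k ℓ)
  exact ha h

noncomputable def Vlim (G : PTG) (ν : ℝ) (ℓ : G.Loc) : EReal := ⨅ n, Viter G ν n ℓ

lemma Vlim_le_Viter {G : PTG} {ν : ℝ} (ℓ : G.Loc) (n : ℕ) : Vlim G ν ℓ ≤ Viter G ν n ℓ :=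
  iInf_le _ n

lemma Vlim_final {G : PTG} {ν : ℝ} {ℓ : G.Loc} (hf : G.owner ℓ = Owner.final) :
    Vlim G ν ℓ = ((G.fcost ℓ ν : ℝ) : EReal) := by
  unfold Vlim
  simp only [fun n => Viter_final (ν := ν) hf n, iInf_const]

lemma Vlim_shift {G : PTG} {ν : ℝ} (ℓ : G.Loc) : ⨅ n, Viter G ν (n + 1) ℓ = Vlim G ν ℓ :=
  iInf_succ_eq (f := fun n => Viter G ν n ℓ) fun n => Viter_succ_le n ℓ

lemma Vlim_min {G : PTG} {ν : ℝ} {ℓ : G.Loc} (hm : G.owner ℓ = Owner.min) :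
    Vlim G ν ℓ = (succsF G ℓ).inf fun δ => ((δ.price : ℝ) : EReal) + Vlim G ν δ.tgt := by
  rw [← Vlim_shift ℓ]
  calc ⨅ n, Viter G ν (n + 1) ℓ
      = ⨅ n, (succsF G ℓ).inf fun δ => ((δ.price : ℝ) : EReal) + Viter G ν n δ.tgt := by
        simp only [Viter_min hm]
    _ = (succsF G ℓ).inf fun δ => ⨅ n, (((δ.price : ℝ) : EReal) + Viter G ν n δ.tgt) :=
        iInf_finsetInf _ _
    _ = (succsF G ℓ).inf fun δ => ((δ.price : ℝ) : EReal) + Vlim G ν δ.tgt := by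
        refine Finset.inf_congr rfl fun δ _ => ?_
        rw [← ereal_add_iInf]; rfl

lemma Vlim_max {G : PTG} {ν : ℝ} (hwf : G.WF) {ℓ : G.Loc} (hm : G.owner ℓ = Owner.max) :
    Vlim G ν ℓ = (succsF G ℓ).sup fun δ => ((δ.price : ℝ) : EReal) + Vlim G ν δ.tgt := by
  have hne : (succsF G ℓ).Nonempty := succsF_nonempty hwf (by simp [hm])
  rw [← Vlim_shift ℓ]
  calc ⨅ n, Viter G ν (n + 1) ℓ
      = ⨅ n, (succsF G ℓ).sup fun δ => ((δ.price : ℝ) : EReal) + Viter G ν n δ.tgt := by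
        simp only [Viter_max hm]
    _ = (succsF G ℓ).sup fun δ => ⨅ n, (((δ.price : ℝ) : EReal) + Viter G ν n δ.tgt) :=
        iInf_finsetSup _ hne _
          (fun δ m n hmn => add_le_add_right (Viter_le_of_le δ.tgt hmn) _)
    _ = (succsF G ℓ).sup fun δ => ((δ.price : ℝ) : EReal) + Vlim G ν δ.tgt := by
        refine Finset.sup_congr rfl fun δ _ => ?_
        rw [← ereal_add_iInf]; rfl

/-! ### The discrete value set -/

def DMem (G : PTG) (ν : ℝ) (y : EReal) : Prop :=
  y = ⊤ ∨ ∃ (k : ℤ) (f : G.Loc), G.owner f = Owner.final ∧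
    y = (((k : ℝ) + G.fcost f ν : ℝ) : EReal)

lemma Viter_DMem {G : PTG} {ν : ℝ} (hwf : G.WF) : ∀ (n : ℕ) (ℓ : G.Loc),
    DMem G ν (Viter G ν n ℓ) := by
  intro n
  induction n with
  | zero =>
    intro ℓ
    by_cases hf : G.owner ℓ = Owner.final
    · exact Or.inr ⟨0, ℓ, hf, by rw [Viter_final hf]; norm_num⟩
    · left; simp [Viter, hf]
  | succ n ih =>
    intro ℓ
    cases hο : G.owner ℓ with
    | final => exact Or.inr ⟨0, ℓ, hο, by rw [Viter_final hο]; norm_num⟩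
    | min =>
      have hne : (succsF G ℓ).Nonempty := succsF_nonempty hwf (by simp [hο])
      obtain ⟨δ, hδ, hv⟩ := Finset.exists_mem_eq_inf (succsF G ℓ) hne
        (fun δ => ((δ.price : ℝ) : EReal) + Viter G ν n δ.tgt)
      rw [Viter_min hο, hv]
      rcases ih δ.tgt with h | ⟨k, f, hff, hk⟩
      · left; rw [h]; exact EReal.add_top_of_ne_bot (EReal.coe_ne_bot _)
      · refine Or.inr ⟨δ.price + k, f, hff, ?_⟩
        rw [hk, ← EReal.coe_add]; push_cast; rw [add_assoc]
    | max =>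
      have hne : (succsF G ℓ).Nonempty := succsF_nonempty hwf (by simp [hο])
      obtain ⟨δ, hδ, hv⟩ := Finset.exists_mem_eq_sup (succsF G ℓ) hne
        (fun δ => ((δ.price : ℝ) : EReal) + Viter G ν n δ.tgt)
      rw [Viter_max hο, hv]
      rcases ih δ.tgt with h | ⟨k, f, hff, hk⟩
      · left; rw [h]; exact EReal.add_top_of_ne_bot (EReal.coe_ne_bot _)
      · refine Or.inr ⟨δ.price + k, f, hff, ?_⟩
        rw [hk, ← EReal.coe_add]; push_cast; rw [add_assoc]

end Aux2

section Aux3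

open Classical

/-! ### Strategy constructions -/

noncomputable def anyTrans (G : PTG) (ℓ : G.Loc) : PTrans G.Loc :=
  if h : (succsF G ℓ).Nonempty then h.choose else ⟨ℓ, 0, 0, false, false, false, 0, ℓ⟩

lemma anyTrans_spec {G : PTG} (hwf : G.WF) {ℓ : G.Loc} (hℓ : G.owner ℓ ≠ Owner.final) :
    anyTrans G ℓ ∈ G.trans ∧ (anyTrans G ℓ).src = ℓ := by
  have hne := succsF_nonempty hwf hℓ
  rw [anyTrans, dif_pos hne]
  exact mem_succsF.1 hne.choose_spec

noncomputable def maxChoice (G : PTG) (ν : ℝ) (ℓ : G.Loc) : PTrans G.Loc :=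
  if h : ∃ δ ∈ succsF G ℓ,
      ((succsF G ℓ).sup fun δ' => ((δ'.price : ℝ) : EReal) + Vlim G ν δ'.tgt) =
        ((δ.price : ℝ) : EReal) + Vlim G ν δ.tgt then
    h.choose
  else anyTrans G ℓ

lemma maxChoice_spec {G : PTG} (hwf : G.WF) {ν : ℝ} {ℓ : G.Loc}
    (hℓ : G.owner ℓ ≠ Owner.final) :
    maxChoice G ν ℓ ∈ succsF G ℓ ∧
      ((succsF G ℓ).sup fun δ' => ((δ'.price : ℝ) : EReal) + Vlim G ν δ'.tgt) =
        (((maxChoice G ν ℓ).price : ℝ) : EReal) + Vlim G ν (maxChoice G ν ℓ).tgt := by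
  have hne := succsF_nonempty hwf hℓ
  have h := Finset.exists_mem_eq_sup (succsF G ℓ) hne
    (fun δ' => ((δ'.price : ℝ) : EReal) + Vlim G ν δ'.tgt)
  rw [maxChoice, dif_pos h]
  exact h.choose_spec

noncomputable def minChoice (G : PTG) (ν : ℝ) (m : ℕ) (ℓ : G.Loc) : PTrans G.Loc :=
  if h : ∃ δ ∈ succsF G ℓ,
      ((succsF G ℓ).inf fun δ' => ((δ'.price : ℝ) : EReal) + Viter G ν m δ'.tgt) =
        ((δ.price : ℝ) : EReal) + Viter G ν m δ.tgt then
    h.choose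
  else anyTrans G ℓ

lemma minChoice_spec {G : PTG} (hwf : G.WF) {ν : ℝ} {m : ℕ} {ℓ : G.Loc}
    (hℓ : G.owner ℓ ≠ Owner.final) :
    minChoice G ν m ℓ ∈ succsF G ℓ ∧
      ((succsF G ℓ).inf fun δ' => ((δ'.price : ℝ) : EReal) + Viter G ν m δ'.tgt) =
        (((minChoice G ν m ℓ).price : ℝ) : EReal) + Viter G ν m (minChoice G ν m ℓ).tgt := by
  have hne := succsF_nonempty hwf hℓ
  have h := Finset.exists_mem_eq_inf (succsF G ℓ) hne
    (fun δ' => ((δ'.price : ℝ) : EReal) + Viter G ν m δ'.tgt)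
  rw [minChoice, dif_pos h]
  exact h.choose_spec

noncomputable def tauStar (G : PTG) (ν : ℝ) : StratFun G.Loc :=
  fun h => (0, maxChoice G ν h.last.1)

noncomputable def sigmaN (G : PTG) (ν : ℝ) (N : ℕ) : StratFun G.Loc :=
  fun h => (0, minChoice G ν (N - 1 - h.steps.length) h.last.1)

lemma stratValid_of_choice {G : PTG} {r : ℝ} (hwf : G.WF) (hsptg : G.IsSPTG r)
    (hurg : ∀ ℓ : G.Loc, G.owner ℓ ≠ Owner.final → G.urgent ℓ = true)
    {P : Owner} (c : Hist G.Loc → PTrans G.Loc)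
    (hc : ∀ h, G.HistValid h → G.owner h.last.1 = P →
      c h ∈ G.trans ∧ (c h).src = h.last.1) :
    G.StratValid P (fun h => (0, c h)) := by
  intro h hv hP
  obtain ⟨hmem, hsrc⟩ := hc h hv hP
  have hnf : G.owner h.last.1 ≠ Owner.final := by
    rw [← hsrc]; exact hwf.1 _ hmem
  have hclock : h.last.2 = h.start.2 := validFrom_clock hwf hsptg hurg h.steps h.start hv.2.2
  have h0 : 0 ≤ h.last.2 := by rw [hclock]; exact hv.1
  have hr : h.last.2 ≤ r := by
    rw [hclock]; exact hv.2.1.trans (M_le_r hwf hsptg ⟨h.last.1, hnf⟩)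
  have hm := move_intro hsptg hmem hsrc h0 hr
  rw [Prod.mk.eta] at hm
  exact ⟨((c h).tgt, h.last.2), ((c h).price : ℝ), hm⟩

lemma tauStar_valid {G : PTG} {r : ℝ} (hwf : G.WF) (hsptg : G.IsSPTG r)
    (hurg : ∀ ℓ : G.Loc, G.owner ℓ ≠ Owner.final → G.urgent ℓ = true) (ν : ℝ) :
    G.MaxValid (tauStar G ν) := by
  refine stratValid_of_choice hwf hsptg hurg _ fun h _ hP => ?_
  have hnf : G.owner h.last.1 ≠ Owner.final := by rw [hP]; simp
  obtain ⟨hmem, heq⟩ := maxChoice_spec hwf (ν := ν) hnf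
  exact ⟨(mem_succsF.1 hmem).1, (mem_succsF.1 hmem).2⟩

lemma sigmaN_valid {G : PTG} {r : ℝ} (hwf : G.WF) (hsptg : G.IsSPTG r)
    (hurg : ∀ ℓ : G.Loc, G.owner ℓ ≠ Owner.final → G.urgent ℓ = true) (ν : ℝ) (N : ℕ) :
    G.MinValid (sigmaN G ν N) := by
  refine stratValid_of_choice hwf hsptg hurg _ fun h _ hP => ?_
  have hnf : G.owner h.last.1 ≠ Owner.final := by rw [hP]; simp
  obtain ⟨hmem, heq⟩ := minChoice_spec hwf (ν := ν) (m := N - 1 - h.steps.length) hnf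
  exact ⟨(mem_succsF.1 hmem).1, (mem_succsF.1 hmem).2⟩

lemma anyStrat_valid {G : PTG} {r : ℝ} (hwf : G.WF) (hsptg : G.IsSPTG r)
    (hurg : ∀ ℓ : G.Loc, G.owner ℓ ≠ Owner.final → G.urgent ℓ = true)
    {P : Owner} (hPf : P ≠ Owner.final) :
    G.StratValid P (fun h => (0, anyTrans G h.last.1)) := by
  refine stratValid_of_choice hwf hsptg hurg _ fun h hv hP => ?_
  exact anyTrans_spec hwf (by rw [hP]; exact hPf)

end Aux3

section Play

set_option linter.unusedSectionVars false

open Classical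

variable {G : PTG} {r : ℝ}

/-- The move selected at step `n` of the play of `(σ, τ)`. -/
noncomputable def playTD (G : PTG) (σ τ : StratFun G.Loc) (s₀ : G.Config) (n : ℕ) :
    ℝ × PTrans G.Loc :=
  if G.owner (G.histOf σ τ s₀ n).last.1 = Owner.min then σ (G.histOf σ τ s₀ n)
  else τ (G.histOf σ τ s₀ n)

lemma histOf_succ_final {σ τ : StratFun G.Loc} {s₀ : G.Config} {n : ℕ}
    (hf : G.owner ((G.histOf σ τ s₀ n).last.1) = Owner.final) :
    G.histOf σ τ s₀ (n + 1) = G.histOf σ τ s₀ n := by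
  simp [PTG.histOf, hf]

lemma histOf_succ_step {σ τ : StratFun G.Loc} {s₀ : G.Config} {n : ℕ}
    (hf : G.owner ((G.histOf σ τ s₀ n).last.1) ≠ Owner.final) :
    G.histOf σ τ s₀ (n + 1) =
      ⟨(G.histOf σ τ s₀ n).start, (G.histOf σ τ s₀ n).steps ++
        [((playTD G σ τ s₀ n).1, (playTD G σ τ s₀ n).2,
          G.nextCfg (G.histOf σ τ s₀ n).last (playTD G σ τ s₀ n))]⟩ := by
  simp [PTG.histOf, hf, playTD]

variable (hwf : G.WF) (hsptg : G.IsSPTG r)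
  (hurg : ∀ ℓ : G.Loc, G.owner ℓ ≠ Owner.final → G.urgent ℓ = true)
  {σ τ : StratFun G.Loc} (hσ : G.MinValid σ) (hτ : G.MaxValid τ)
  {ℓ0 : G.Loc} {ν : ℝ} (hν0 : 0 ≤ ν) (hνM : ν ≤ (G.M : ℝ))

include hwf hsptg hurg hσ hτ hν0 hνM

lemma histOf_props : ∀ n, G.HistValid (G.histOf σ τ (ℓ0, ν) n) ∧
    (G.histOf σ τ (ℓ0, ν) n).start = (ℓ0, ν) := by
  intro n
  induction n with
  | zero => exact ⟨⟨hν0, hνM, trivial⟩, rfl⟩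
  | succ n ih =>
    by_cases hf : G.owner ((G.histOf σ τ (ℓ0, ν) n).last.1) = Owner.final
    · rw [histOf_succ_final hf]; exact ih
    · rw [histOf_succ_step hf]
      have hmove : ∃ s' c, G.Move (G.histOf σ τ (ℓ0, ν) n).last s'
          (playTD G σ τ (ℓ0, ν) n).1 (playTD G σ τ (ℓ0, ν) n).2 c := by
        cases hο : G.owner ((G.histOf σ τ (ℓ0, ν) n).last.1) with
        | min =>
          rw [playTD, if_pos hο]
          exact hσ _ ih.1 hο
        | max =>
          rw [playTD, if_neg (by rw [hο]; simp)]
          exact hτ _ ih.1 hο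
        | final => exact absurd hο hf
      obtain ⟨s', c, hm⟩ := hmove
      have hs' : s' = G.nextCfg (G.histOf σ τ (ℓ0, ν) n).last (playTD G σ τ (ℓ0, ν) n) := by
        obtain ⟨_, _, _, _, _, h1, h2, _⟩ := hm
        exact Prod.ext h1 (by rw [h2]; rfl)
      constructor
      · refine ⟨?_, ?_, ?_⟩
        · show (0:ℝ) ≤ (G.histOf σ τ (ℓ0, ν) n).start.2
          rw [ih.2]; exact hν0
        · show (G.histOf σ τ (ℓ0, ν) n).start.2 ≤ (G.M : ℝ)
          rw [ih.2]; exact hνM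
        · exact (validFrom_append _ _ _ _ _).2 ⟨ih.1.2.2, ⟨c, hs' ▸ hm⟩⟩
      · show (G.histOf σ τ (ℓ0, ν) n).start = (ℓ0, ν)
        exact ih.2

lemma histOf_clock (n : ℕ) : (G.histOf σ τ (ℓ0, ν) n).last.2 = ν := by
  have hp := histOf_props hwf hsptg hurg hσ hτ (ℓ0 := ℓ0) hν0 hνM n
  have hc := validFrom_clock hwf hsptg hurg _ _ hp.1.2.2
  show (Hist.lastFrom _ _).2 = ν
  rw [hc, hp.2]

lemma playTD_move (n : ℕ)
    (hnf : G.owner ((G.histOf σ τ (ℓ0, ν) n).last.1) ≠ Owner.final) :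
    ∃ s' c, G.Move (G.histOf σ τ (ℓ0, ν) n).last s'
      (playTD G σ τ (ℓ0, ν) n).1 (playTD G σ τ (ℓ0, ν) n).2 c := by
  have ih := histOf_props hwf hsptg hurg hσ hτ (ℓ0 := ℓ0) hν0 hνM n
  cases hο : G.owner ((G.histOf σ τ (ℓ0, ν) n).last.1) with
  | min => rw [playTD, if_pos hο]; exact hσ _ ih.1 hο
  | max => rw [playTD, if_neg (by rw [hο]; simp)]; exact hτ _ ih.1 hο
  | final => exact absurd hο hnf

lemma histOf_step (n : ℕ)
    (hnf : G.owner ((G.histOf σ τ (ℓ0, ν) n).last.1) ≠ Owner.final) :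
    (playTD G σ τ (ℓ0, ν) n).2 ∈ G.trans ∧
    (playTD G σ τ (ℓ0, ν) n).2.src = (G.histOf σ τ (ℓ0, ν) n).last.1 ∧
    (G.histOf σ τ (ℓ0, ν) (n + 1)).last =
      ((playTD G σ τ (ℓ0, ν) n).2.tgt, (G.histOf σ τ (ℓ0, ν) n).last.2) ∧
    G.accCost (G.histOf σ τ (ℓ0, ν) (n + 1)) =
      G.accCost (G.histOf σ τ (ℓ0, ν) n) + ((playTD G σ τ (ℓ0, ν) n).2.price : ℝ) := by
  obtain ⟨s', c, hm⟩ := playTD_move hwf hsptg hurg hσ hτ hν0 hνM n hnf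
  obtain ⟨hmem, hsrc, ht0, hs'eq, hceq⟩ := move_eq hwf hsptg hurg hm
  have hres : (playTD G σ τ (ℓ0, ν) n).2.reset = false := (hsptg.2.2 _ hmem).2.2.2.2
  refine ⟨hmem, hsrc, ?_, ?_⟩
  · rw [histOf_succ_step hnf]
    show Hist.lastFrom _ (_ ++ [_]) = _
    rw [lastFrom_append]
    show G.nextCfg (G.histOf σ τ (ℓ0, ν) n).last (playTD G σ τ (ℓ0, ν) n) = _
    rw [PTG.nextCfg, hres, ht0]
    simp
  · rw [histOf_succ_step hnf]
    show Hist.costFrom _ _ (_ ++ [_]) = _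
    rw [costFrom_append, ht0]
    simp only [zero_mul, add_zero]
    rfl

lemma histOf_len : ∀ n, G.owner ((G.histOf σ τ (ℓ0, ν) n).last.1) ≠ Owner.final →
    (G.histOf σ τ (ℓ0, ν) n).steps.length = n := by
  intro n
  induction n with
  | zero => intro _; rfl
  | succ n ih =>
    intro hnf
    have hnf' : G.owner ((G.histOf σ τ (ℓ0, ν) n).last.1) ≠ Owner.final := by
      intro hf
      rw [histOf_succ_final hf] at hnf
      exact hnf hf
    rw [histOf_succ_step hnf']
    show ((G.histOf σ τ (ℓ0, ν) n).steps ++ [_]).length = n + 1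
    rw [List.length_append, ih hnf']
    rfl

end Play

section Invariants

set_option linter.unusedSectionVars false

open Classical

variable {G : PTG} {r : ℝ}

/-- The quantity `acc + Vlim` along the play of `σ` against `τ*`. -/
noncomputable def AQty (G : PTG) (σ : StratFun G.Loc) (ℓ0 : G.Loc) (ν : ℝ) (n : ℕ) : EReal :=
  ((G.accCost (G.histOf σ (tauStar G ν) (ℓ0, ν) n) : ℝ) : EReal) +
    Vlim G ν ((G.histOf σ (tauStar G ν) (ℓ0, ν) n).last.1)

/-- The quantity `acc + Viter (N - n)` along the play of `σ_N` against `τ`. -/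
noncomputable def BQty (G : PTG) (τ : StratFun G.Loc) (ℓ0 : G.Loc) (ν : ℝ) (N n : ℕ) : EReal :=
  ((G.accCost (G.histOf (sigmaN G ν N) τ (ℓ0, ν) n) : ℝ) : EReal) +
    Viter G ν (N - n) ((G.histOf (sigmaN G ν N) τ (ℓ0, ν) n).last.1)

variable (hwf : G.WF) (hsptg : G.IsSPTG r)
  (hurg : ∀ ℓ : G.Loc, G.owner ℓ ≠ Owner.final → G.urgent ℓ = true)
  {σ τ : StratFun G.Loc} {ℓ0 : G.Loc} {ν : ℝ} (hν0 : 0 ≤ ν) (hνM : ν ≤ (G.M : ℝ))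

lemma AQty_zero (σ : StratFun G.Loc) : AQty G σ ℓ0 ν 0 = Vlim G ν ℓ0 := by
  show ((0 : ℝ) : EReal) + Vlim G ν ℓ0 = Vlim G ν ℓ0
  rw [EReal.coe_zero, zero_add]

lemma BQty_zero (τ : StratFun G.Loc) (N : ℕ) : BQty G τ ℓ0 ν N 0 = Viter G ν N ℓ0 := by
  show ((0 : ℝ) : EReal) + Viter G ν (N - 0) ℓ0 = Viter G ν N ℓ0
  rw [EReal.coe_zero, zero_add, Nat.sub_zero]

include hwf hsptg hurg hν0 hνM

lemma stepA (hσ : G.MinValid σ) (n : ℕ) : AQty G σ ℓ0 ν n ≤ AQty G σ ℓ0 ν (n + 1) := by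
  have hτs : G.MaxValid (tauStar G ν) := tauStar_valid hwf hsptg hurg ν
  by_cases hf : G.owner ((G.histOf σ (tauStar G ν) (ℓ0, ν) n).last.1) = Owner.final
  · unfold AQty; rw [histOf_succ_final hf]
  · obtain ⟨hmem, hsrc, hlast, hacc⟩ :=
      histOf_step hwf hsptg hurg hσ hτs (ℓ0 := ℓ0) hν0 hνM n hf
    set δ := (playTD G σ (tauStar G ν) (ℓ0, ν) n).2 with hδdef
    have hAQ1 : AQty G σ ℓ0 ν (n + 1) =
        ((G.accCost (G.histOf σ (tauStar G ν) (ℓ0, ν) n) + (δ.price : ℝ) : ℝ) : EReal) +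
          Vlim G ν δ.tgt := by
      unfold AQty; rw [hacc, hlast]
    cases hο : G.owner ((G.histOf σ (tauStar G ν) (ℓ0, ν) n).last.1) with
    | min =>
      have hVle : Vlim G ν ((G.histOf σ (tauStar G ν) (ℓ0, ν) n).last.1) ≤
          ((δ.price : ℝ) : EReal) + Vlim G ν δ.tgt := by
        rw [Vlim_min hο]
        exact Finset.inf_le (mem_succsF.2 ⟨hmem, hsrc⟩)
      calc AQty G σ ℓ0 ν n
          ≤ ((G.accCost (G.histOf σ (tauStar G ν) (ℓ0, ν) n) : ℝ) : EReal) +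
            (((δ.price : ℝ) : EReal) + Vlim G ν δ.tgt) := add_le_add_right hVle _
        _ = AQty G σ ℓ0 ν (n + 1) := by rw [hAQ1, EReal.coe_add, add_assoc]
    | max =>
      have hδmax : δ = maxChoice G ν ((G.histOf σ (tauStar G ν) (ℓ0, ν) n).last.1) := by
        rw [hδdef, playTD, if_neg (by rw [hο]; simp)]
        rfl
      have hnf : G.owner ((G.histOf σ (tauStar G ν) (ℓ0, ν) n).last.1) ≠ Owner.final := by
        rw [hο]; simp
      obtain ⟨_, hspec⟩ := maxChoice_spec hwf (ν := ν) hnf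
      have hVeq : Vlim G ν ((G.histOf σ (tauStar G ν) (ℓ0, ν) n).last.1) =
          ((δ.price : ℝ) : EReal) + Vlim G ν δ.tgt := by
        rw [Vlim_max hwf hο, hδmax] at *
        exact hspec
      refine le_of_eq ?_
      calc AQty G σ ℓ0 ν n
          = ((G.accCost (G.histOf σ (tauStar G ν) (ℓ0, ν) n) : ℝ) : EReal) +
            (((δ.price : ℝ) : EReal) + Vlim G ν δ.tgt) := by unfold AQty; rw [hVeq]
        _ = AQty G σ ℓ0 ν (n + 1) := by rw [hAQ1, EReal.coe_add, add_assoc]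
    | final => exact absurd hο hf

lemma AQty_mono (hσ : G.MinValid σ) {m n : ℕ} (hmn : m ≤ n) :
    AQty G σ ℓ0 ν m ≤ AQty G σ ℓ0 ν n := by
  induction n, hmn using Nat.le_induction with
  | base => exact le_rfl
  | succ n hn ih => exact ih.trans (stepA hwf hsptg hurg hν0 hνM hσ n)

lemma invA (hσ : G.MinValid σ) (n : ℕ) : Vlim G ν ℓ0 ≤ AQty G σ ℓ0 ν n := by
  rw [← AQty_zero (ℓ0 := ℓ0) (ν := ν) σ]
  exact AQty_mono hwf hsptg hurg hν0 hνM hσ (Nat.zero_le n)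

lemma stepB (hτ : G.MaxValid τ) {N n : ℕ} (hn : n < N) :
    BQty G τ ℓ0 ν N (n + 1) ≤ BQty G τ ℓ0 ν N n := by
  have hσs : G.MinValid (sigmaN G ν N) := sigmaN_valid hwf hsptg hurg ν N
  by_cases hf : G.owner ((G.histOf (sigmaN G ν N) τ (ℓ0, ν) n).last.1) = Owner.final
  · unfold BQty; rw [histOf_succ_final hf, Viter_final hf, Viter_final hf]
  · obtain ⟨hmem, hsrc, hlast, hacc⟩ :=
      histOf_step hwf hsptg hurg hσs hτ (ℓ0 := ℓ0) hν0 hνM n hf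
    have hlen : (G.histOf (sigmaN G ν N) τ (ℓ0, ν) n).steps.length = n :=
      histOf_len hwf hsptg hurg hσs hτ (ℓ0 := ℓ0) hν0 hνM n hf
    set δ := (playTD G (sigmaN G ν N) τ (ℓ0, ν) n).2 with hδdef
    have h1 : N - 1 - n + 1 = N - n := by omega
    have h2 : N - (n + 1) = N - 1 - n := by omega
    have hBQ1 : BQty G τ ℓ0 ν N (n + 1) =
        ((G.accCost (G.histOf (sigmaN G ν N) τ (ℓ0, ν) n) + (δ.price : ℝ) : ℝ) : EReal) +
          Viter G ν (N - 1 - n) δ.tgt := by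
      unfold BQty; rw [hacc, hlast, h2]
    cases hο : G.owner ((G.histOf (sigmaN G ν N) τ (ℓ0, ν) n).last.1) with
    | min =>
      have hδmin : δ = minChoice G ν (N - 1 - n)
          ((G.histOf (sigmaN G ν N) τ (ℓ0, ν) n).last.1) := by
        rw [hδdef, playTD, if_pos hο]
        show (sigmaN G ν N (G.histOf (sigmaN G ν N) τ (ℓ0, ν) n)).2 = _
        rw [sigmaN, hlen]
      obtain ⟨_, hspec⟩ := minChoice_spec hwf (ν := ν) (m := N - 1 - n) (by rw [hο]; simp)
      have hVeq : Viter G ν (N - n) ((G.histOf (sigmaN G ν N) τ (ℓ0, ν) n).last.1) =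
          ((δ.price : ℝ) : EReal) + Viter G ν (N - 1 - n) δ.tgt := by
        rw [← h1, Viter_min hο, hδmin]
        exact hspec
      refine le_of_eq ?_
      rw [hBQ1]
      unfold BQty
      rw [hVeq, EReal.coe_add, add_assoc]
    | max =>
      have hVge : ((δ.price : ℝ) : EReal) + Viter G ν (N - 1 - n) δ.tgt ≤
          Viter G ν (N - n) ((G.histOf (sigmaN G ν N) τ (ℓ0, ν) n).last.1) := by
        rw [← h1, Viter_max hο]
        exact Finset.le_sup (f := fun δ' => ((δ'.price : ℝ) : EReal) + Viter G ν (N - 1 - n) δ'.tgt) (mem_succsF.2 ⟨hmem, hsrc⟩)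
      calc BQty G τ ℓ0 ν N (n + 1)
          = ((G.accCost (G.histOf (sigmaN G ν N) τ (ℓ0, ν) n) : ℝ) : EReal) +
            (((δ.price : ℝ) : EReal) + Viter G ν (N - 1 - n) δ.tgt) := by
              rw [hBQ1, EReal.coe_add, add_assoc]
        _ ≤ BQty G τ ℓ0 ν N n := add_le_add_right hVge _
    | final => exact absurd hο hf

lemma invB (hτ : G.MaxValid τ) {N n : ℕ} (hn : n ≤ N) :
    BQty G τ ℓ0 ν N n ≤ Viter G ν N ℓ0 := by
  induction n with
  | zero => exact le_of_eq (BQty_zero (ℓ0 := ℓ0) (ν := ν) τ N)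
  | succ n ih =>
    exact (stepB hwf hsptg hurg hν0 hνM hτ (by omega)).trans (ih (by omega))

lemma reachB (hτ : G.MaxValid τ) {N : ℕ} (hN : Viter G ν N ℓ0 ≠ ⊤) :
    G.owner ((G.histOf (sigmaN G ν N) τ (ℓ0, ν) N).last.1) = Owner.final := by
  by_contra hf
  have h1 := invB hwf hsptg hurg (ℓ0 := ℓ0) hν0 hνM hτ (le_refl N)
  rw [BQty] at h1
  have h2 : Viter G ν (N - N) ((G.histOf (sigmaN G ν N) τ (ℓ0, ν) N).last.1) = ⊤ := by
    rw [Nat.sub_self]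
    simp [Viter, hf]
  rw [h2, EReal.coe_add_top] at h1
  exact hN (top_le_iff.1 h1)

omit hwf hsptg hurg hν0 hνM in
lemma playCost_eq_of_final {σ τ : StratFun G.Loc} {s₀ : G.Config}
    (hex : ∃ n, G.owner ((G.histOf σ τ s₀ n).last.1) = Owner.final) :
    G.playCost σ τ s₀ =
      (((G.accCost (G.histOf σ τ s₀ (Nat.find hex)) +
        G.fcost ((G.histOf σ τ s₀ (Nat.find hex)).last.1)
          ((G.histOf σ τ s₀ (Nat.find hex)).last.2)) : ℝ) : EReal) := by
  rw [PTG.playCost, dif_pos hex]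

lemma playCost_tauStar_ge (hσ : G.MinValid σ) :
    Vlim G ν ℓ0 ≤ G.playCost σ (tauStar G ν) (ℓ0, ν) := by
  have hτs : G.MaxValid (tauStar G ν) := tauStar_valid hwf hsptg hurg ν
  by_cases hex : ∃ n, G.owner ((G.histOf σ (tauStar G ν) (ℓ0, ν) n).last.1) = Owner.final
  · rw [playCost_eq_of_final hex]
    have h1 := invA hwf hsptg hurg (ℓ0 := ℓ0) hν0 hνM hσ (Nat.find hex)
    rw [AQty, Vlim_final (Nat.find_spec hex)] at h1
    simp only [histOf_clock hwf hsptg hurg hσ hτs (ℓ0 := ℓ0) hν0 hνM] at h1 ⊢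
    rwa [EReal.coe_add]
  · rw [PTG.playCost, dif_neg hex]
    exact le_top

lemma playCost_sigmaN_le (hτ : G.MaxValid τ) (N : ℕ) :
    G.playCost (sigmaN G ν N) τ (ℓ0, ν) ≤ Viter G ν N ℓ0 := by
  have hσs : G.MinValid (sigmaN G ν N) := sigmaN_valid hwf hsptg hurg ν N
  by_cases hN : Viter G ν N ℓ0 = ⊤
  · rw [hN]; exact le_top
  · have hfin := reachB hwf hsptg hurg hν0 hνM hτ hN
    have hex : ∃ n, G.owner ((G.histOf (sigmaN G ν N) τ (ℓ0, ν) n).last.1) = Owner.final :=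
      ⟨N, hfin⟩
    rw [playCost_eq_of_final hex]
    have hle : Nat.find hex ≤ N := Nat.find_min' hex hfin
    have h1 := invB hwf hsptg hurg (ℓ0 := ℓ0) hν0 hνM hτ hle
    rw [BQty, Viter_final (Nat.find_spec hex)] at h1
    simp only [histOf_clock hwf hsptg hurg hσs hτ (ℓ0 := ℓ0) hν0 hνM]
    rwa [← EReal.coe_add] at h1

lemma val_eq_Vlim : G.val (ℓ0, ν) = Vlim G ν ℓ0 := by
  apply le_antisymm
  · show G.lval _ ≤ _
    refine iSup_le fun τp => le_iInf fun N => ?_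
    refine iInf_le_of_le ⟨sigmaN G ν N, sigmaN_valid hwf hsptg hurg ν N⟩ ?_
    exact playCost_sigmaN_le hwf hsptg hurg hν0 hνM τp.2 N
  · show _ ≤ G.lval _
    refine le_iSup_of_le ⟨tauStar G ν, tauStar_valid hwf hsptg hurg ν⟩ ?_
    exact le_iInf fun σp => playCost_tauStar_ge hwf hsptg hurg hν0 hνM σp.2

end Invariants

section Stabilize

open Classical

lemma exists_Viter_eq {G : PTG} (hwf : G.WF) {ν : ℝ} {ℓ : G.Loc} {x : ℝ}
    (hx : Vlim G ν ℓ = (x : EReal)) : ∃ N, Viter G ν N ℓ = (x : EReal) := by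
  have hN0 : ∃ N₀, Viter G ν N₀ ℓ ≠ ⊤ := by
    by_contra h
    push_neg at h
    have htop : Vlim G ν ℓ = ⊤ := by
      rw [Vlim]
      simp only [fun n => h n, iInf_const]
    rw [hx] at htop
    exact EReal.coe_ne_top x htop
  obtain ⟨N₀, hN₀⟩ := hN0
  haveI : Nonempty G.Loc := ⟨ℓ⟩
  have hne_bot : Viter G ν N₀ ℓ ≠ ⊥ := by
    rcases Viter_DMem hwf N₀ ℓ with h | ⟨k, f, _, hk⟩
    · exact absurd h hN₀
    · rw [hk]; exact EReal.coe_ne_bot _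
  set aN : ℝ := (Viter G ν N₀ ℓ).toReal with haN
  have hcoe : ((aN : ℝ) : EReal) = Viter G ν N₀ ℓ := EReal.coe_toReal hN₀ hne_bot
  set cmax : ℝ := Finset.univ.sup' Finset.univ_nonempty (fun f : G.Loc => G.fcost f ν)
    with hcmax
  set cmin : ℝ := Finset.univ.inf' Finset.univ_nonempty (fun f : G.Loc => G.fcost f ν)
    with hcmin
  set Sfin : Finset ℝ := ((Finset.univ : Finset G.Loc) ×ˢ
      Finset.Icc ⌈x - cmax⌉ ⌊aN - cmin⌋).image
    (fun q : G.Loc × ℤ => (q.2 : ℝ) + G.fcost q.1 ν) with hSfin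
  set T : Set EReal := Set.range (fun n => Viter G ν (N₀ + n) ℓ) with hT
  have hTsub : T ⊆ (fun y : ℝ => (y : EReal)) '' ↑Sfin := by
    rintro - ⟨n, rfl⟩
    show Viter G ν (N₀ + n) ℓ ∈ (fun y : ℝ => (y : EReal)) '' ↑Sfin
    have hle : Viter G ν (N₀ + n) ℓ ≤ Viter G ν N₀ ℓ :=
      Viter_le_of_le ℓ (Nat.le_add_right _ _)
    have hge : (x : EReal) ≤ Viter G ν (N₀ + n) ℓ := hx ▸ Vlim_le_Viter ℓ _
    rcases Viter_DMem hwf (N₀ + n) ℓ with htop | ⟨k, f, hff, hk⟩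
    · rw [htop] at hle
      exact absurd (top_le_iff.1 hle) hN₀
    · rw [hk] at hle hge ⊢
      rw [← hcoe] at hle
      have hge' : x ≤ (k : ℝ) + G.fcost f ν := EReal.coe_le_coe_iff.1 hge
      have hle' : (k : ℝ) + G.fcost f ν ≤ aN := EReal.coe_le_coe_iff.1 hle
      have hfmax : G.fcost f ν ≤ cmax := by
        rw [hcmax]; exact Finset.le_sup' (fun g : G.Loc => G.fcost g ν) (Finset.mem_univ f)
      have hfmin : cmin ≤ G.fcost f ν := by
        rw [hcmin]; exact Finset.inf'_le (fun g : G.Loc => G.fcost g ν) (Finset.mem_univ f)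
      refine ⟨(k : ℝ) + G.fcost f ν, ?_, rfl⟩
      rw [hSfin]
      simp only [Finset.coe_image, Set.mem_image, Finset.mem_coe, Finset.mem_product,
        Finset.mem_univ, true_and, Finset.mem_Icc]
      exact ⟨(f, k), ⟨Int.ceil_le.2 (by linarith), Int.le_floor.2 (by linarith)⟩, rfl⟩
  have hTfin : T.Finite := Set.Finite.subset ((Sfin : Set ℝ).toFinite.image _) hTsub
  have hTne : T.Nonempty := ⟨_, ⟨0, rfl⟩⟩
  have hsInf : sInf T = (x : EReal) := by
    rw [hT, sInf_range, ← hx, Vlim]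
    apply le_antisymm
    · refine le_iInf fun n => ?_
      exact (iInf_le (fun n => Viter G ν (N₀ + n) ℓ) n).trans
        (Viter_le_of_le ℓ (Nat.le_add_left _ _))
    · exact le_iInf fun n => iInf_le _ (N₀ + n)
  have hmem := hTne.csInf_mem hTfin
  rw [hsInf] at hmem
  obtain ⟨n, hn⟩ := hmem
  exact ⟨N₀ + n, hn⟩

end Stabilize

section FinalCase

open Classical

lemma val_final {G : PTG} {r : ℝ} (hwf : G.WF) (hsptg : G.IsSPTG r)
    (hurg : ∀ ℓ : G.Loc, G.owner ℓ ≠ Owner.final → G.urgent ℓ = true)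
    {ℓ : G.Loc} {ν : ℝ} (hf : G.owner ℓ = Owner.final) :
    G.val (ℓ, ν) = ((G.fcost ℓ ν : ℝ) : EReal) := by
  have hMin : G.MinValid (fun h => (0, anyTrans G h.last.1)) :=
    anyStrat_valid hwf hsptg hurg (by simp)
  have hMax : G.MaxValid (fun h => (0, anyTrans G h.last.1)) :=
    anyStrat_valid hwf hsptg hurg (by simp)
  have hpc : ∀ σ τ : StratFun G.Loc,
      G.playCost σ τ (ℓ, ν) = ((G.fcost ℓ ν : ℝ) : EReal) := by
    intro σ τ
    have hex : ∃ n, G.owner ((G.histOf σ τ (ℓ, ν) n).last.1) = Owner.final := ⟨0, hf⟩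
    rw [playCost_eq_of_final hex]
    have h0 : Nat.find hex = 0 := (Nat.find_eq_zero hex).2 hf
    rw [h0]
    show (((0 : ℝ) + G.fcost ℓ ν : ℝ) : EReal) = _
    norm_num
  haveI hMinNe : Nonempty {σ : StratFun G.Loc // G.MinValid σ} := ⟨⟨_, hMin⟩⟩
  haveI hMaxNe : Nonempty {τ : StratFun G.Loc // G.MaxValid τ} := ⟨⟨_, hMax⟩⟩
  show G.lval _ = _
  rw [PTG.lval]
  have hmv : ∀ τp : {τ : StratFun G.Loc // G.MaxValid τ},
      G.maxValue τp.1 (ℓ, ν) = ((G.fcost ℓ ν : ℝ) : EReal) := by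
    intro τp
    rw [PTG.maxValue]
    simp only [hpc]
    exact iInf_const
  simp only [hmv]
  exact iSup_const

end FinalCase

section Chains

open Classical

/-- A path in the transition graph along which `p` decreases exactly by the prices. -/
def PChain (G : PTG) (p : G.Loc → ℝ) : G.Loc → G.Loc → List (PTrans G.Loc) → Prop
  | a, b, [] => a = b
  | a, b, δ :: ds => δ ∈ G.trans ∧ δ.src = a ∧ p a = (δ.price : ℝ) + p δ.tgt ∧
      PChain G p δ.tgt b ds

lemma price_abs_le {G : PTG} {δ : PTrans G.Loc} (h : δ ∈ G.trans) :
    |δ.price| ≤ (G.PT : ℤ) := by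
  rw [Int.abs_eq_natAbs]
  exact_mod_cast Finset.le_sup (f := fun δ => δ.price.natAbs) h

lemma pchain_sum {G : PTG} {p : G.Loc → ℝ} :
    ∀ {ds : List (PTrans G.Loc)} {a b : G.Loc}, PChain G p a b ds →
      p a = (((ds.map fun δ => δ.price).sum : ℤ) : ℝ) + p b := by
  intro ds
  induction ds with
  | nil => intro a b h; rw [h]; simp
  | cons δ ds ih =>
    intro a b h
    obtain ⟨_, _, hpa, hch⟩ := h
    rw [hpa, ih hch, List.map_cons, List.sum_cons, Int.cast_add, add_assoc]

lemma pchain_bound {G : PTG} {p : G.Loc → ℝ} :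
    ∀ {ds : List (PTrans G.Loc)} {a b : G.Loc}, PChain G p a b ds →
      |(ds.map fun δ => δ.price).sum| ≤ (ds.length : ℤ) * (G.PT : ℤ) := by
  intro ds
  induction ds with
  | nil => intro a b _; simp
  | cons δ ds ih =>
    intro a b h
    obtain ⟨hmem, _, _, hch⟩ := h
    have h1 := price_abs_le hmem
    have h2 := ih hch
    have h3 := abs_add_le (δ.price) ((ds.map fun δ => δ.price).sum)
    simp only [List.map_cons, List.sum_cons, List.length_cons]
    push_cast
    calc |δ.price + (ds.map fun δ => δ.price).sum|
        ≤ |δ.price| + |(ds.map fun δ => δ.price).sum| := h3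
      _ ≤ (G.PT : ℤ) + (ds.length : ℤ) * (G.PT : ℤ) := add_le_add h1 h2
      _ = ((ds.length : ℤ) + 1) * (G.PT : ℤ) := by ring

lemma pchain_tail {G : PTG} {p : G.Loc → ℝ} {b : G.Loc} :
    ∀ {ds : List (PTrans G.Loc)} {c : G.Loc}, PChain G p c b ds →
      ∀ {y : G.Loc}, y ∈ ds.map PTrans.tgt →
        ∃ ds', PChain G p y b ds' ∧ ds'.length < ds.length := by
  intro ds
  induction ds with
  | nil => intro c _ y hy; simp at hy
  | cons δ ds ih =>
    intro c h y hy
    obtain ⟨_, _, _, hch⟩ := h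
    rw [List.map_cons, List.mem_cons] at hy
    rcases hy with hy | hy
    · exact ⟨ds, hy ▸ hch, by simp⟩
    · obtain ⟨ds', h1, h2⟩ := ih hch hy
      exact ⟨ds', h1, h2.trans (by simp)⟩

lemma pchain_shorten {G : PTG} {p : G.Loc → ℝ} {b : G.Loc} :
    ∀ (m : ℕ) {ds : List (PTrans G.Loc)} {a : G.Loc}, ds.length ≤ m →
      PChain G p a b ds →
      ∃ ds', PChain G p a b ds' ∧ (a :: ds'.map PTrans.tgt).Nodup ∧
        ds'.length ≤ ds.length := by
  intro m
  induction m with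
  | zero =>
    intro ds a hlen h
    rw [Nat.le_zero, List.length_eq_zero_iff] at hlen
    subst hlen
    exact ⟨[], h, by simp, le_rfl⟩
  | succ m ih =>
    intro ds a hlen h
    cases ds with
    | nil => exact ⟨[], h, by simp, le_rfl⟩
    | cons δ rest =>
      obtain ⟨hmem, hsrc, hpa, hch⟩ := h
      have hrest : rest.length ≤ m := by simpa using hlen
      obtain ⟨rest', hch', hnd', hlen'⟩ := ih hrest hch
      by_cases ha : a ∈ δ.tgt :: rest'.map PTrans.tgt
      · rcases List.mem_cons.1 ha with heq | hmemtl
        · subst heq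
          exact ⟨rest', hch', hnd', hlen'.trans (by simp)⟩
        · obtain ⟨ds'', hch'', hlt⟩ := pchain_tail hch' hmemtl
          obtain ⟨ds3, hch3, hnd3, hlen3⟩ := ih (by omega) hch''
          refine ⟨ds3, hch3, hnd3, by simp; omega⟩
      · refine ⟨δ :: rest', ⟨hmem, hsrc, hpa, hch'⟩, ?_, by simpa using hlen'⟩
        rw [List.map_cons]
        exact List.nodup_cons.2 ⟨ha, hnd'⟩

end Chains

section MainCase

open Classical

lemma main_case {G : PTG} {r : ℝ} (hwf : G.WF) (hsptg : G.IsSPTG r)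
    (hurg : ∀ ℓ : G.Loc, G.owner ℓ ≠ Owner.final → G.urgent ℓ = true)
    {ℓ : G.Loc} {ν : ℝ} {x : ℝ} (h0 : 0 ≤ ν) (hνM : ν ≤ (G.M : ℝ))
    (hveq : Vlim G ν ℓ = (x : EReal)) :
    ∃ (f : G.Loc) (k : ℤ), G.owner f = Owner.final ∧
      |k| ≤ ((G.nLoc : ℤ) - 1) * (G.PT : ℤ) ∧ x = (k : ℝ) + G.fcost f ν := by
  obtain ⟨N, hN⟩ := exists_Viter_eq hwf hveq
  have hσv : G.MinValid (sigmaN G ν N) := sigmaN_valid hwf hsptg hurg ν N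
  have hτv : G.MaxValid (tauStar G ν) := tauStar_valid hwf hsptg hurg ν
  have hNtop : Viter G ν N ℓ ≠ ⊤ := by rw [hN]; exact EReal.coe_ne_top x
  have hfin := reachB hwf hsptg hurg (ℓ0 := ℓ) h0 hνM hτv hNtop
  have hexf : ∃ n, G.owner ((G.histOf (sigmaN G ν N) (tauStar G ν) (ℓ, ν) n).last.1)
      = Owner.final := ⟨N, hfin⟩
  have hnsN : Nat.find hexf ≤ N := Nat.find_min' hexf hfin
  have hfinal := Nat.find_spec hexf
  have hA := invA hwf hsptg hurg (ℓ0 := ℓ) h0 hνM hσv (Nat.find hexf)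
  have hB := invB hwf hsptg hurg (ℓ0 := ℓ) h0 hνM hτv hnsN
  rw [AQty, Vlim_final hfinal, hveq] at hA
  rw [BQty, Viter_final hfinal, hN] at hB
  have hcost : G.accCost (G.histOf (sigmaN G ν N) (tauStar G ν) (ℓ, ν) (Nat.find hexf)) +
      G.fcost ((G.histOf (sigmaN G ν N) (tauStar G ν) (ℓ, ν) (Nat.find hexf)).last.1) ν
      = x := by
    have heq := le_antisymm hB hA
    rw [← EReal.coe_add] at heq
    exact EReal.coe_eq_coe_iff.1 heq
  have hAub : AQty G (sigmaN G ν N) ℓ ν (Nat.find hexf) = (x : EReal) := by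
    rw [AQty, Vlim_final hfinal, ← EReal.coe_add, hcost]
  have hAconst : ∀ i, i ≤ Nat.find hexf → AQty G (sigmaN G ν N) ℓ ν i = (x : EReal) := by
    intro i hi
    refine le_antisymm ?_ ?_
    · rw [← hAub]; exact AQty_mono hwf hsptg hurg h0 hνM hσv hi
    · rw [← hveq]; exact invA hwf hsptg hurg h0 hνM hσv i
  set p : G.Loc → ℝ := fun ℓ' => (Vlim G ν ℓ').toReal with hp
  have hpati : ∀ i, i ≤ Nat.find hexf →
      p ((G.histOf (sigmaN G ν N) (tauStar G ν) (ℓ, ν) i).last.1) =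
        x - G.accCost (G.histOf (sigmaN G ν N) (tauStar G ν) (ℓ, ν) i) := by
    intro i hi
    have h1 := hAconst i hi
    rw [AQty] at h1
    have h2 := ereal_add_eq_coe h1
    show (Vlim G ν _).toReal = _
    rw [h2, EReal.toReal_coe]
  have hchain : ∀ m j, j + m = Nat.find hexf →
      ∃ ds, PChain G p ((G.histOf (sigmaN G ν N) (tauStar G ν) (ℓ, ν) j).last.1)
        ((G.histOf (sigmaN G ν N) (tauStar G ν) (ℓ, ν) (Nat.find hexf)).last.1) ds := by
    intro m
    induction m with
    | zero =>
      intro j hj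
      have hjj : j = Nat.find hexf := by omega
      subst hjj
      exact ⟨[], rfl⟩
    | succ m ih =>
      intro j hj
      have hjlt : j < Nat.find hexf := by omega
      have hjnf : G.owner ((G.histOf (sigmaN G ν N) (tauStar G ν) (ℓ, ν) j).last.1)
          ≠ Owner.final := Nat.find_min hexf hjlt
      obtain ⟨hmem, hsrc, hlast, hacc⟩ :=
        histOf_step hwf hsptg hurg hσv hτv (ℓ0 := ℓ) h0 hνM j hjnf
      obtain ⟨ds, hds⟩ := ih (j + 1) (by omega)
      have hLj1 : (G.histOf (sigmaN G ν N) (tauStar G ν) (ℓ, ν) (j + 1)).last.1 =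
          (playTD G (sigmaN G ν N) (tauStar G ν) (ℓ, ν) j).2.tgt := by rw [hlast]
      refine ⟨(playTD G (sigmaN G ν N) (tauStar G ν) (ℓ, ν) j).2 :: ds,
        hmem, hsrc, ?_, ?_⟩
      · have h1 := hpati j hjlt.le
        have h2 := hpati (j + 1) (by omega)
        rw [hLj1] at h2
        rw [h1, h2, hacc]; ring
      · rw [← hLj1]; exact hds
  obtain ⟨ds, hds⟩ := hchain (Nat.find hexf) 0 (by omega)
  obtain ⟨ds', hds', hnd, -⟩ := pchain_shorten ds.length le_rfl hds
  have hlen : ds'.length + 1 ≤ G.nLoc := by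
    have h1 := hnd.length_le_card
    simpa [PTG.nLoc] using h1
  have hsum := pchain_sum hds'
  have hkabs := pchain_bound hds'
  have hPT0 : (0 : ℤ) ≤ (G.PT : ℤ) := Int.natCast_nonneg _
  have hp0 : p ((G.histOf (sigmaN G ν N) (tauStar G ν) (ℓ, ν) 0).last.1) = x := by
    rw [hpati 0 (Nat.zero_le _)]
    show x - (0 : ℝ) = x
    ring
  have hpn : p ((G.histOf (sigmaN G ν N) (tauStar G ν) (ℓ, ν) (Nat.find hexf)).last.1) =
      G.fcost ((G.histOf (sigmaN G ν N) (tauStar G ν) (ℓ, ν) (Nat.find hexf)).last.1) ν := by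
    rw [hpati _ le_rfl]
    linarith [hcost]
  refine ⟨(G.histOf (sigmaN G ν N) (tauStar G ν) (ℓ, ν) (Nat.find hexf)).last.1,
    (ds'.map fun δ => δ.price).sum, hfinal, ?_, ?_⟩
  · calc |(ds'.map fun δ => δ.price).sum| ≤ (ds'.length : ℤ) * (G.PT : ℤ) := hkabs
      _ ≤ ((G.nLoc : ℤ) - 1) * (G.PT : ℤ) := by
          refine mul_le_mul_of_nonneg_right ?_ hPT0
          have h2 : (ds'.length : ℤ) + 1 ≤ (G.nLoc : ℤ) := by exact_mod_cast hlen
          omega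
  · rw [← hp0, hsum, hpn]

end MainCase

/-- Lemma 9: in an `r`-SPTG with only urgent (non-final) locations,
every finite value `Val_G(ℓ, ν)` is realized by some function of `F_G`. -/
theorem urgent_sptg_val_in_FF (G : PTG) (hwf : G.WF) (r : ℚ) (hsptg : G.IsSPTG (r : ℝ))
    (hurg : ∀ ℓ : G.Loc, G.owner ℓ ≠ Owner.final → G.urgent ℓ = true)
    (ℓ : G.Loc) (ν : ℝ) (h0 : 0 ≤ ν) (hν : ν ≤ (r : ℝ))
    (x : ℝ) (hx : G.val (ℓ, ν) = (x : EReal)) :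
    ∃ f ∈ G.FF, x = f ν := by
  classical
  haveI : Nonempty G.Loc := ⟨ℓ⟩
  have hn1 : 1 ≤ G.nLoc := Fintype.card_pos
  have hPT0 : (0 : ℤ) ≤ (G.PT : ℤ) := Int.natCast_nonneg _
  have hnl : (1 : ℤ) ≤ (G.nLoc : ℤ) := by exact_mod_cast hn1
  by_cases hf : G.owner ℓ = Owner.final
  · have hv := val_final hwf hsptg hurg (ν := ν) hf
    rw [hx] at hv
    have hxf : x = G.fcost ℓ ν := EReal.coe_eq_coe_iff.1 hv
    refine ⟨fun ν' => ((0 : ℤ) : ℝ) + G.fcost ℓ ν', ⟨ℓ, 0, hf, ?_, ?_, rfl⟩, ?_⟩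
    · have hmn : (0 : ℤ) ≤ ((G.nLoc : ℤ) - 1) * (G.PT : ℤ) :=
        mul_nonneg (by linarith) hPT0
      linarith
    · exact mul_nonneg (by linarith) hPT0
    · simp [hxf]
  · have hexnf : ∃ ℓ' : G.Loc, G.owner ℓ' ≠ Owner.final := ⟨ℓ, hf⟩
    have hνM : ν ≤ (G.M : ℝ) := hν.trans (r_le_M hwf hsptg hexnf)
    have hveq : Vlim G ν ℓ = (x : EReal) := by
      rw [← val_eq_Vlim hwf hsptg hurg (ℓ0 := ℓ) h0 hνM]
      exact hx
    obtain ⟨f, k, hff, hkabs, hxk⟩ := main_case hwf hsptg hurg h0 hνM hveq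
    refine ⟨fun ν' => (k : ℝ) + G.fcost f ν', ⟨f, k, hff, ?_, ?_, rfl⟩, hxk⟩
    · linarith [neg_abs_le k, hkabs]
    · have h1 : k ≤ ((G.nLoc : ℤ) - 1) * (G.PT : ℤ) := (le_abs_self k).trans hkabs
      have h2 : ((G.nLoc : ℤ) - 1) * (G.PT : ℤ) ≤ (G.nLoc : ℤ) * (G.PT : ℤ) :=
        mul_le_mul_of_nonneg_right (by linarith) hPT0
      linarith

end PTGPaper
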